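/- On the symplectic 4-torus M = (ℝ/ℤ)⁴ with symplectic form ω = dφ₁ ∧ dφ₂ + √2 dψ₁ ∧ dψ₂, the symplectic circle action λ·(φ₁,φ₂,ψ₁,ψ₂) = (φ₁−λ, φ₂, ψ₁−λ, ψ₂) admits no group-valued momentum map: the 1-form α = dφ₂ + √2 dψ₂ defined by A* ⨼ ω + κ(A, α) = 0 has period homomorphism on π₁(M) with image {m + √2 n : m, n ∈ ℤ}, which is dense in ℝ and hence non-trivial in both ℝ and ℝ/ℤ; therefore no smooth map J : M → G* with δJ = α exists for either possible 1-dimensional dual group G* = ℝ or G* = ℝ/ℤ. -/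

import Mathlib

/-- The symplectic form `ω = dφ₁ ∧ dφ₂ + √2 dψ₁ ∧ dψ₂` on the 4-torus
`(ℝ/ℤ)⁴`, written on the universal cover `ℝ⁴` (coordinates indexed by `Fin 4`:
`0 ↦ φ₁, 1 ↦ φ₂, 2 ↦ ψ₁, 3 ↦ ψ₂`). -/
noncomputable def torusSymp (u v : Fin 4 → ℝ) : ℝ :=
  u 0 * v 1 - u 1 * v 0 + Real.sqrt 2 * (u 2 * v 3 - u 3 * v 2)

/-- The 1-form `α = dφ₂ + √2 dψ₂` (constant coefficients on the universal cover). -/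
noncomputable def torusAlpha : (Fin 4 → ℝ) →L[ℝ] ℝ :=
  ContinuousLinearMap.proj 1 + Real.sqrt 2 • ContinuousLinearMap.proj 3

/-- The fundamental vector field `-∂φ₁ - ∂ψ₁` of the circle action
`λ·(φ₁,φ₂,ψ₁,ψ₂) = (φ₁−λ, φ₂, ψ₁−λ, ψ₂)`. -/
noncomputable def torusGen : Fin 4 → ℝ := ![-1, 0, -1, 0]

/-!
STATEMENT 13.  On the symplectic 4-torus `M = (ℝ/ℤ)⁴` with
`ω = dφ₁∧dφ₂ + √2 dψ₁∧dψ₂`, the symplectic circle action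
`λ·(φ₁,φ₂,ψ₁,ψ₂) = (φ₁−λ, φ₂, ψ₁−λ, ψ₂)` admits no group-valued momentum map.
Functions and forms on the torus are represented by their `ℤ⁴`-periodic lifts to
`ℝ⁴`.  The theorem asserts:
(1) the 1-form `α = dφ₂ + √2 dψ₂` satisfies the defining relation
    `A* ⨼ ω + κ(A, α) = 0` (for the generator `A = 1`);
(2) any primitive `F` of `α` on the universal cover has period homomorphism with
    image `{m + √2 n : m, n ∈ ℤ}` on the generating loops (`per(γ₂) = 1`,
    `per(γ₄) = √2`);
(3) no momentum map with values in `G* = ℝ` exists, i.e. no primitive of `α`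
    descends to the torus;
(4) no momentum map with values in `G* = ℝ/ℤ` exists, i.e. no primitive of `α`
    descends modulo `ℤ`.
-/

lemma torusAlpha_diff (F : (Fin 4 → ℝ) → ℝ) (hF : ∀ x, HasFDerivAt F torusAlpha x)
    (x v : Fin 4 → ℝ) : F (x + v) - F x = torusAlpha v := by
  have hg : ∀ y, HasFDerivAt (fun y => F y - torusAlpha y)
      (0 : (Fin 4 → ℝ) →L[ℝ] ℝ) y := by
    intro y
    have h := (hF y).sub (torusAlpha.hasFDerivAt (x := y))
    rw [sub_self] at h
    exact h
  have hc := is_const_of_fderiv_eq_zero (𝕜 := ℝ)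
    (fun y => (hg y).differentiableAt) (fun y => (hg y).fderiv) (x + v) x
  have := hc
  simp only [map_add] at this
  linarith [this]

lemma torusAlpha_apply (v : Fin 4 → ℝ) : torusAlpha v = v 1 + Real.sqrt 2 * v 3 := by
  simp [torusAlpha]

theorem torus_circle_action_has_no_group_valued_momentum_map :
    -- (1) the defining relation A* ⨼ ω + κ(A, α) = 0 for the generator A = 1
    (∀ v : Fin 4 → ℝ, torusSymp torusGen v + torusAlpha v = 0) ∧
    -- (2) the period homomorphism has image {m + √2 n : m, n ∈ ℤ}
    (∀ F : (Fin 4 → ℝ) → ℝ, (∀ x, HasFDerivAt F torusAlpha x) →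
      ∀ (x : Fin 4 → ℝ) (m n : ℤ),
        F (x + (m : ℝ) • (Pi.single 1 1 : Fin 4 → ℝ) + (n : ℝ) • (Pi.single 3 1 : Fin 4 → ℝ)) - F x
          = (m : ℝ) + (n : ℝ) * Real.sqrt 2) ∧
    -- (3) no momentum map with values in G* = ℝ
    (¬ ∃ F : (Fin 4 → ℝ) → ℝ,
      (∀ x, HasFDerivAt F torusAlpha x) ∧
      (∀ (x : Fin 4 → ℝ) (l : Fin 4 → ℤ), F (x + fun i => (l i : ℝ)) = F x)) ∧
    -- (4) no momentum map with values in G* = ℝ/ℤ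
    (¬ ∃ F : (Fin 4 → ℝ) → ℝ,
      (∀ x, HasFDerivAt F torusAlpha x) ∧
      (∀ (x : Fin 4 → ℝ) (l : Fin 4 → ℤ),
        ∃ n : ℤ, F (x + fun i => (l i : ℝ)) - F x = (n : ℝ))) := by
  refine ⟨?_, ?_, ?_, ?_⟩
  · intro v
    simp only [torusSymp, torusGen, torusAlpha_apply]
    simp [Matrix.cons_val_zero, Matrix.cons_val_one]
    ring
  · intro F hF x m n
    have h := torusAlpha_diff F hF x
      ((m : ℝ) • (Pi.single 1 1 : Fin 4 → ℝ) + (n : ℝ) • (Pi.single 3 1 : Fin 4 → ℝ))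
    rw [← add_assoc] at h
    rw [h, map_add, map_smul, map_smul, torusAlpha_apply, torusAlpha_apply]
    simp [Pi.single_apply]
  · rintro ⟨F, hF, hper⟩
    have h1 : (fun i => ((Pi.single 1 1 : Fin 4 → ℤ) i : ℝ)) = (Pi.single 1 1 : Fin 4 → ℝ) := by
      ext i
      simp [Pi.single_apply]
    have h := torusAlpha_diff F hF 0 (Pi.single 1 1)
    rw [torusAlpha_apply] at h
    have h2 := hper 0 (Pi.single 1 1)
    rw [h1] at h2
    rw [h2] at h
    simp [Pi.single_apply] at h
  · rintro ⟨F, hF, hper⟩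
    have h1 : (fun i => ((Pi.single 3 1 : Fin 4 → ℤ) i : ℝ)) = (Pi.single 3 1 : Fin 4 → ℝ) := by
      ext i
      simp [Pi.single_apply]
    have h := torusAlpha_diff F hF 0 (Pi.single 3 1)
    rw [torusAlpha_apply] at h
    obtain ⟨k, hk⟩ := hper 0 (Pi.single 3 1)
    rw [h1] at hk
    rw [hk] at h
    simp [Pi.single_apply] at h
    exact irrational_sqrt_two.ne_int k h.symm
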